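/- arXiv:2503.13675 — 5 statements merged into one kernel-verified Lean document; each statement's English description precedes it below -/
import Mathlib

section
/- Let A ∈ ℝ^{n_x×n_x} be invertible, B ∈ ℝ^{n_x×n_u}, S ∈ ℝ^{n_x×n_x} symmetric positive definite, L ∈ ℝ^{n_u×n_x}, Y ∈ ℝ^{n_u×n_u} symmetric, R ∈ ℝ^{n_u×n_u} symmetric positive definite, and ρ > 0 a real number. Suppose there exist a symmetric matrix Λ ∈ ℝ^{n_x×n_x} and a symmetric positive semidefinite matrix M ∈ ℝ^{n_u×n_u} satisfying the KKT stationarity conditions ρ·BᵀΛA + M L S⁻¹ = 0 and ρ·R − M + ρ·BᵀΛB = 0, and the complementary slackness condition Tr(M C) = 0, where C := L S⁻¹ Lᵀ − Y is negative semidefinite. Then C = 0, i.e., Y = L S⁻¹ Lᵀ (the convex relaxation Y ⪰ L S⁻¹ Lᵀ is lossless at any KKT point). -/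
open Matrix

/-- A real positive semidefinite matrix with zero trace is zero. -/
lemma psd_trace_zero {n : ℕ} {P : Matrix (Fin n) (Fin n) ℝ}
    (hP : P.PosSemidef) (h : P.trace = 0) : P = 0 := by
  open scoped MatrixOrder in
  obtain ⟨B, rfl⟩ := CStarAlgebra.nonneg_iff_eq_star_mul_self.mp hP.nonneg
  have h' : ∑ j, ∑ i, (B i j) ^ 2 = 0 := by
    simpa [Matrix.trace, Matrix.diag, Matrix.mul_apply, Matrix.star_apply, Matrix.conjTranspose_apply, sq] using h
  have hB : B = 0 := by
    ext i j
    have h2 := (Finset.sum_eq_zero_iff_of_nonneg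
      (fun j _ => Finset.sum_nonneg fun i _ => sq_nonneg (B i j))).mp h' j (Finset.mem_univ j)
    have h3 := (Finset.sum_eq_zero_iff_of_nonneg
      (fun i _ => sq_nonneg (B i j))).mp h2 i (Finset.mem_univ i)
    simpa using (pow_eq_zero_iff two_ne_zero).mp h3
  rw [hB]; simp

/-- algebraic core of Theorem 1: losslessness of the convex relaxation
in the unconstrained MJLS covariance-steering subproblem. Given the KKT stationarity
conditions `ρ·BᵀΛA + M L S⁻¹ = 0` and `ρ·R − M + ρ·BᵀΛB = 0`, the complementary
slackness condition `Tr(M C) = 0` with `C := L S⁻¹ Lᵀ − Y ⪯ 0` and `M ⪰ 0`,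
one has `C = 0`, i.e. `Y = L S⁻¹ Lᵀ`. -/
theorem stmt_2 {nx nu : ℕ}
    (A : Matrix (Fin nx) (Fin nx) ℝ) (hA : IsUnit A.det)
    (B : Matrix (Fin nx) (Fin nu) ℝ)
    (S : Matrix (Fin nx) (Fin nx) ℝ) (hSsymm : S.IsSymm) (hS : S.PosDef)
    (L : Matrix (Fin nu) (Fin nx) ℝ)
    (Y : Matrix (Fin nu) (Fin nu) ℝ) (hY : Y.IsSymm)
    (R : Matrix (Fin nu) (Fin nu) ℝ) (hRsymm : R.IsSymm) (hR : R.PosDef)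
    (ρ : ℝ) (hρ : 0 < ρ)
    (Λ : Matrix (Fin nx) (Fin nx) ℝ) (hΛ : Λ.IsSymm)
    (M : Matrix (Fin nu) (Fin nu) ℝ) (hMsymm : M.IsSymm) (hM : M.PosSemidef)
    (hstat1 : ρ • (Bᵀ * Λ * A) + M * L * S⁻¹ = 0)
    (hstat2 : ρ • R - M + ρ • (Bᵀ * Λ * B) = 0)
    (hCnsd : (-(L * S⁻¹ * Lᵀ - Y)).PosSemidef)
    (hcs : (M * (L * S⁻¹ * Lᵀ - Y)).trace = 0) :
    L * S⁻¹ * Lᵀ - Y = 0 := by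
  set C := L * S⁻¹ * Lᵀ - Y with hCdef
  set W := L * S⁻¹ * (A⁻¹ * B) with hWdef
  -- Step 1: from stationarity, M = ρ•R - M*W
  have h1 : ρ • (Bᵀ * Λ * B) = -(M * W) := by
    have h := congrArg (· * (A⁻¹ * B)) hstat1
    simp only [Matrix.add_mul, Matrix.smul_mul, Matrix.zero_mul] at h
    have hassoc : Bᵀ * Λ * A * (A⁻¹ * B) = Bᵀ * Λ * B := by
      rw [Matrix.mul_assoc (Bᵀ * Λ) A, Matrix.mul_nonsing_inv_cancel_left A B hA]
    have hassoc2 : M * L * S⁻¹ * (A⁻¹ * B) = M * W := by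
      simp only [hWdef, Matrix.mul_assoc]
    rw [hassoc, hassoc2] at h
    rw [← smul_eq_mul] at h
    exact eq_neg_of_add_eq_zero_left h
  have hMeq : M = ρ • R - M * W := by
    have := hstat2
    rw [h1] at this
    linear_combination (norm := abel) -this
  -- Step 2: M is positive definite
  have hMpd : M.PosDef := by
    refine Matrix.posDef_iff_dotProduct_mulVec.mpr ⟨hM.1, fun x hx => ?_⟩
    rcases (hM.dotProduct_mulVec_nonneg x).lt_or_eq with hlt | heq
    · exact hlt
    · exfalso
      apply hx
      have hker : M *ᵥ x = 0 := (hM.dotProduct_mulVec_zero_iff x).mp heq.symm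
      have hvm : x ᵥ* M = 0 := by
        rw [← hMsymm, Matrix.vecMul_transpose, hker]
      have hMWx : x ⬝ᵥ (M * W) *ᵥ x = 0 := by
        rw [← Matrix.mulVec_mulVec, Matrix.dotProduct_mulVec, hvm, zero_dotProduct]
      have hMx : x ⬝ᵥ M *ᵥ x = 0 := by rw [hker, dotProduct_zero]
      have hRx : x ⬝ᵥ R *ᵥ x = 0 := by
        have := congrArg (fun N => x ⬝ᵥ N *ᵥ x) hMeq
        simp only [Matrix.sub_mulVec, Matrix.smul_mulVec, dotProduct_sub,
          dotProduct_smul, smul_eq_mul] at this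
        rw [hMx, hMWx] at this
        have : ρ * (x ⬝ᵥ R *ᵥ x) = 0 := by linarith
        exact (mul_eq_zero.mp this).resolve_left hρ.ne'
      by_contra hxne
      have := hR.dotProduct_mulVec_pos hxne
      simp only [star_trivial] at this
      rw [hRx] at this
      exact lt_irrefl 0 this
  -- Step 3: complementary slackness forces C = 0
  obtain ⟨Ms, hMsMs, hMsherm⟩ : ∃ Ms : Matrix (Fin nu) (Fin nu) ℝ, Ms * Ms = M ∧ Msᴴ = Ms := by
    open scoped MatrixOrder in
    exact ⟨CFC.sqrt M, CFC.sqrt_mul_sqrt_self M hM.nonneg, (CFC.sqrt_nonneg M).posSemidef.1⟩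
  have hMsdet : IsUnit Ms.det := by
    have hMdet : IsUnit M.det := hMpd.det_pos.ne'.isUnit
    rw [← hMsMs, Matrix.det_mul] at hMdet
    exact isUnit_iff_ne_zero.mpr (left_ne_zero_of_mul hMdet.ne_zero)
  have hPpsd : (Ms * (-C) * Ms).PosSemidef := by
    have := hCnsd.mul_mul_conjTranspose_same Ms
    rwa [hMsherm] at this
  have hPtr : (Ms * (-C) * Ms).trace = 0 := by
    rw [Matrix.trace_mul_cycle, hMsMs, Matrix.mul_neg, Matrix.trace_neg, hcs, neg_zero]
  have hP0 : Ms * (-C) * Ms = 0 := psd_trace_zero hPpsd hPtr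
  have : -C = 0 := by
    have h := congrArg (fun X => Ms⁻¹ * X * Ms⁻¹) hP0
    simp only [Matrix.mul_assoc, Matrix.nonsing_inv_mul_cancel_left _ _ hMsdet,
      Matrix.mul_nonsing_inv Ms hMsdet, Matrix.mul_one, Matrix.mul_zero, Matrix.zero_mul] at h
    exact h
  exact neg_eq_zero.mp this
end

section
/- Let A ∈ ℝ^{n_x×n_x} be invertible, B ∈ ℝ^{n_x×n_u}, S ∈ ℝ^{n_x×n_x} symmetric positive definite, L ∈ ℝ^{n_u×n_x}, Y ∈ ℝ^{n_u×n_u} symmetric, R ∈ ℝ^{n_u×n_u} symmetric positive definite, ρ > 0 a real number, v, f ∈ ℝ^{n_u} vectors, and λ₁, λ₂ ≥ 0 real numbers. Suppose there exist a symmetric matrix Λ ∈ ℝ^{n_x×n_x} and a symmetric positive semidefinite matrix M ∈ ℝ^{n_u×n_u} satisfying the KKT stationarity conditions ρ·BᵀΛA + M L S⁻¹ = 0 and ρ·R + λ₁·v vᵀ + λ₂·f fᵀ − M + ρ·BᵀΛB = 0, and the complementary slackness condition Tr(M C) = 0, where C := L S⁻¹ Lᵀ − Y is negative semidefinite. Then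 C = 0, i.e., Y = L S⁻¹ Lᵀ. -/
open Matrix

/-- A real positive semidefinite matrix with zero trace is zero. -/
lemma psd_trace_zero_aux {n : ℕ} {N : Matrix (Fin n) (Fin n) ℝ}
    (hN : N.PosSemidef) (h : N.trace = 0) : N = 0 := by
  have hnn : ∀ i, 0 ≤ N i i := fun i => by
    have := hN.dotProduct_mulVec_nonneg (Pi.single i 1)
    simpa [dotProduct, Matrix.mulVec, Pi.single_apply, Finset.mul_sum] using this
  have hdiag : ∀ i ∈ Finset.univ, N i i = 0 := by
    rw [← Finset.sum_eq_zero_iff_of_nonneg (fun i _ => hnn i)]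
    simpa [Matrix.trace, Matrix.diag] using h
  have hker : ∀ i, N *ᵥ Pi.single i 1 = 0 := by
    intro i
    rw [← hN.dotProduct_mulVec_zero_iff]
    have : (Pi.single i 1 : Fin n → ℝ) ⬝ᵥ N *ᵥ Pi.single i 1 = N i i := by
      simp [dotProduct, Matrix.mulVec, Pi.single_apply, Finset.mul_sum]
    simpa [this] using hdiag i (Finset.mem_univ i)
  ext j i
  have := congrFun (hker i) j
  simpa [Matrix.mulVec, dotProduct, Pi.single_apply] using this

lemma vecMul_smul_matrix_aux {m n : ℕ} (x : Fin m → ℝ) (c : ℝ)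
    (P : Matrix (Fin m) (Fin n) ℝ) : x ᵥ* (c • P) = c • (x ᵥ* P) := by
  ext j
  simp [Matrix.vecMul, dotProduct, Finset.mul_sum, mul_left_comm]

/-- algebraic core of Theorem 2: losslessness of the convex relaxation
in the chance-constrained MJLS covariance-steering subproblem. Given the KKT
stationarity conditions `ρ·BᵀΛA + M L S⁻¹ = 0` and
`ρ·R + λ₁·v vᵀ + λ₂·f fᵀ − M + ρ·BᵀΛB = 0`, the complementary slackness condition
`Tr(M C) = 0` with `C := L S⁻¹ Lᵀ − Y ⪯ 0` and `M ⪰ 0`, one has `C = 0`,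
i.e. `Y = L S⁻¹ Lᵀ`. -/
theorem stmt_3 {nx nu : ℕ}
    (A : Matrix (Fin nx) (Fin nx) ℝ) (hA : IsUnit A.det)
    (B : Matrix (Fin nx) (Fin nu) ℝ)
    (S : Matrix (Fin nx) (Fin nx) ℝ) (hSsymm : S.IsSymm) (hS : S.PosDef)
    (L : Matrix (Fin nu) (Fin nx) ℝ)
    (Y : Matrix (Fin nu) (Fin nu) ℝ) (hY : Y.IsSymm)
    (R : Matrix (Fin nu) (Fin nu) ℝ) (hRsymm : R.IsSymm) (hR : R.PosDef)
    (ρ : ℝ) (hρ : 0 < ρ)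
    (v f : Fin nu → ℝ) (lam₁ lam₂ : ℝ) (hlam₁ : 0 ≤ lam₁) (hlam₂ : 0 ≤ lam₂)
    (Λ : Matrix (Fin nx) (Fin nx) ℝ) (hΛ : Λ.IsSymm)
    (M : Matrix (Fin nu) (Fin nu) ℝ) (hMsymm : M.IsSymm) (hM : M.PosSemidef)
    (hstat1 : ρ • (Bᵀ * Λ * A) + M * L * S⁻¹ = 0)
    (hstat2 : ρ • R + lam₁ • vecMulVec v v + lam₂ • vecMulVec f f - M
        + ρ • (Bᵀ * Λ * B) = 0)
    (hCnsd : (-(L * S⁻¹ * Lᵀ - Y)).PosSemidef)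
    (hcs : (M * (L * S⁻¹ * Lᵀ - Y)).trace = 0) :
    L * S⁻¹ * Lᵀ - Y = 0 := by
  have hρ' : ρ ≠ 0 := ne_of_gt hρ
  -- Step 1: kernel of M is trivial
  have hker : ∀ x : Fin nu → ℝ, M *ᵥ x = 0 → x = 0 := by
    intro x hx
    -- x ᵥ* M = 0
    have hxM : x ᵥ* M = 0 := by
      rw [← hMsymm, vecMul_transpose, hx]
    -- from hstat1: x ᵥ* (Bᵀ * Λ * A) = 0
    have h1 : x ᵥ* (Bᵀ * Λ * A) = 0 := by
      have := congrArg (fun P => x ᵥ* P) hstat1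
      simp only [vecMul_add, vecMul_zero, vecMul_smul_matrix_aux] at this
      have h2 : x ᵥ* (M * L * S⁻¹) = 0 := by
        rw [Matrix.mul_assoc, ← vecMul_vecMul, hxM, zero_vecMul]
      rw [h2, add_zero, smul_eq_zero] at this
      exact this.resolve_left hρ'
    -- hence x ᵥ* (Bᵀ * Λ) = 0
    have h2 : x ᵥ* (Bᵀ * Λ) = 0 := by
      have := congrArg (fun w => w ᵥ* A⁻¹) h1
      simp only [zero_vecMul] at this
      rwa [← vecMul_vecMul, vecMul_vecMul, Matrix.mul_nonsing_inv _ hA,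
        vecMul_one] at this
    -- hence the quadratic form of Bᵀ Λ B at x vanishes
    have h3 : x ⬝ᵥ (Bᵀ * Λ * B) *ᵥ x = 0 := by
      rw [dotProduct_mulVec, ← vecMul_vecMul, h2, zero_vecMul, zero_dotProduct]
    -- quadratic form of hstat2 at x
    have h4 := congrArg (fun P => x ⬝ᵥ P *ᵥ x) hstat2
    simp only [add_mulVec, sub_mulVec, smul_mulVec, dotProduct_add,
      dotProduct_sub, dotProduct_smul, zero_mulVec, dotProduct_zero] at h4
    have hxMx : x ⬝ᵥ M *ᵥ x = 0 := by rw [hx, dotProduct_zero]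
    have hvv : x ⬝ᵥ vecMulVec v v *ᵥ x = (v ⬝ᵥ x) * (v ⬝ᵥ x) := by
      simp [dotProduct, Matrix.mulVec, Matrix.vecMulVec_apply,
        Finset.sum_mul, Finset.mul_sum, mul_assoc]
      rw [Finset.sum_comm]
      congr 1; ext i; congr 1; ext j; ring
    have hff : x ⬝ᵥ vecMulVec f f *ᵥ x = (f ⬝ᵥ x) * (f ⬝ᵥ x) := by
      simp [dotProduct, Matrix.mulVec, Matrix.vecMulVec_apply,
        Finset.sum_mul, Finset.mul_sum, mul_assoc]
      rw [Finset.sum_comm]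
      congr 1; ext i; congr 1; ext j; ring
    rw [hxMx, h3, hvv, hff] at h4
    simp only [smul_eq_mul, mul_zero, smul_zero, sub_zero, add_zero] at h4
    -- so ρ xᵀRx + λ₁ (v⬝x)² + λ₂ (f⬝x)² = 0 with all terms nonneg
    by_contra hx0
    have hRx : 0 < x ⬝ᵥ R *ᵥ x := by
      have := hR.dotProduct_mulVec_pos hx0
      simpa using this
    have t1 : 0 < ρ * (x ⬝ᵥ R *ᵥ x) := mul_pos hρ hRx
    have t2 : 0 ≤ lam₁ * ((v ⬝ᵥ x) * (v ⬝ᵥ x)) :=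
      mul_nonneg hlam₁ (mul_self_nonneg _)
    have t3 : 0 ≤ lam₂ * ((f ⬝ᵥ x) * (f ⬝ᵥ x)) :=
      mul_nonneg hlam₂ (mul_self_nonneg _)
    linarith
  -- Step 2: M is positive definite
  have hMpd : M.PosDef := by
    refine posDef_iff_dotProduct_mulVec.mpr ⟨hM.1, fun x hx => ?_⟩
    rcases lt_or_eq_of_le (hM.dotProduct_mulVec_nonneg x) with h | h
    · exact h
    · exact absurd (hker x ((hM.dotProduct_mulVec_zero_iff x).mp h.symm)) hx
  -- Step 3: use complementary slackness
  set N : Matrix (Fin nu) (Fin nu) ℝ := -(L * S⁻¹ * Lᵀ - Y) with hNdef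
  have hN : N.PosSemidef := hCnsd
  have htrMN : (M * N).trace = 0 := by
    have : M * N = -(M * (L * S⁻¹ * Lᵀ - Y)) := by
      rw [hNdef, Matrix.mul_neg]
    rw [this, trace_neg, hcs, neg_zero]
  obtain ⟨P, hPsa, -, hPP'⟩ := open scoped MatrixOrder in
    CFC.exists_sqrt_of_isSelfAdjoint_of_quasispectrumRestricts hN.isHermitian
      (QuasispectrumRestricts.nnreal_of_nonneg hN.nonneg)
  have hPP : P * P = N := hPP'
  have hPherm : Pᴴ = P := hPsa
  have hPMP : P * M * P = 0 := by
    apply psd_trace_zero_aux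
    · have := hM.conjTranspose_mul_mul_same P
      rwa [hPherm] at this
    · calc (P * M * P).trace = (P * (P * M)).trace := by
            rw [Matrix.trace_mul_cycle, Matrix.mul_assoc]
          _ = (M * N).trace := by
            rw [← Matrix.mul_assoc, Matrix.trace_mul_comm, hPP]
          _ = 0 := htrMN
  -- hence P = 0
  have hPker : ∀ x : Fin nu → ℝ, P *ᵥ x = 0 := by
    intro x
    by_contra hPx
    have hPsymm : Pᵀ = P := by
      ext i j
      have := congrFun (congrFun hPherm i) j
      simpa using this
    have hxP : P *ᵥ x = x ᵥ* P := by
      conv_lhs => rw [← hPsymm]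
      rw [mulVec_transpose]
    have hq : x ⬝ᵥ (P * M * P) *ᵥ x = (P *ᵥ x) ⬝ᵥ M *ᵥ (P *ᵥ x) := by
      conv_lhs => rw [← mulVec_mulVec, dotProduct_mulVec, ← vecMul_vecMul,
        ← hxP, ← dotProduct_mulVec]
    have hpos := hMpd.dotProduct_mulVec_pos hPx
    rw [star_trivial] at hpos
    rw [← hq, hPMP, zero_mulVec, dotProduct_zero] at hpos
    exact lt_irrefl 0 hpos
  have hP0 : P = 0 := by
    ext j i
    have := congrFun (hPker (Pi.single i 1)) j
    simpa [Matrix.mulVec, dotProduct, Pi.single_apply] using this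
  have hN0 : N = 0 := by rw [← hPP, hP0, Matrix.mul_zero]
  exact neg_eq_zero.mp hN0
end

section
/- Let J be a finite index set, a_j ∈ ℝⁿ and b_j ∈ ℝ for each j ∈ J, ε ∈ (0,1), and ε_j ∈ (0,1) for each j with Σ_{j∈J} ε_j ≤ ε. If for every j ∈ J it holds that a_jᵀv̄ + b_j + √(((1−ε_j)/ε_j)·a_jᵀVa_j) ≤ 0, then P(a_jᵀv + b_j ≤ 0 for all j ∈ J) ≥ 1 − ε. -/
open MeasureTheory Matrix

/-- One-sided Chebyshev (Cantelli) style bound. -/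
lemma cantelli_aux {Ω : Type*} [MeasurableSpace Ω] (P : Measure Ω) [IsProbabilityMeasure P]
    (Y : Ω → ℝ) (hY : MemLp Y 2 P) (hmean : ∫ ω, Y ω ∂P = 0)
    {σ2 : ℝ} (hσ2 : ∫ ω, (Y ω)^2 ∂P = σ2)
    {t ε : ℝ} (hε0 : 0 < ε) (hε1 : ε < 1)
    (ht : Real.sqrt ((1 - ε) / ε * σ2) ≤ t) :
    P {ω | t < Y ω} ≤ ENNReal.ofReal ε := by
  have hYint : Integrable Y P := hY.integrable one_le_two
  have hY2int : Integrable (fun ω => (Y ω)^2) P := hY.integrable_sq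
  have hσ2nn : 0 ≤ σ2 := hσ2 ▸ integral_nonneg fun ω => sq_nonneg _
  rcases eq_or_lt_of_le hσ2nn with hσ20 | hσ2pos
  · -- variance zero: Y = 0 a.e.
    have hzero : (fun ω => (Y ω)^2) =ᵐ[P] 0 := by
      rw [← integral_eq_zero_iff_of_nonneg (fun ω => sq_nonneg _) hY2int, hσ2, ← hσ20]
    have hYae : ∀ᵐ ω ∂P, Y ω = 0 := by
      filter_upwards [hzero] with ω hω
      exact pow_eq_zero_iff (by norm_num) |>.mp hω
    have ht0 : 0 ≤ t := le_trans (Real.sqrt_nonneg _) ht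
    have : P {ω | t < Y ω} = 0 := by
      apply measure_mono_null (fun ω hω => ?_) (ae_iff.mp hYae)
      simp only [Set.mem_setOf_eq] at hω ⊢
      exact ne_of_gt (lt_of_le_of_lt ht0 hω)
    simp [this]
  · -- positive variance
    have harg : 0 < (1 - ε) / ε * σ2 :=
      mul_pos (div_pos (by linarith) hε0) hσ2pos
    have ht0 : 0 < t := lt_of_lt_of_le (Real.sqrt_pos.mpr harg) ht
    have htsq : (1 - ε) / ε * σ2 ≤ t ^ 2 := by
      calc (1 - ε) / ε * σ2 = Real.sqrt ((1 - ε) / ε * σ2) ^ 2 :=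
            (Real.sq_sqrt harg.le).symm
        _ ≤ t ^ 2 := by gcongr
    set l := σ2 / t with hl
    have hl0 : 0 < l := div_pos hσ2pos ht0
    have htl : 0 < t + l := by linarith
    -- integrability of (Y + l)^2
    have hint : Integrable (fun ω => (Y ω + l)^2) P := by
      have : (fun ω => (Y ω + l)^2)
          = fun ω => (Y ω)^2 + (2*l) * Y ω + l^2 := by funext ω; ring
      rw [this]
      exact (hY2int.add (hYint.const_mul _)).add (integrable_const _)
    have hintval : ∫ ω, (Y ω + l)^2 ∂P = σ2 + l^2 := by
      have : (fun ω => (Y ω + l)^2)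
          = fun ω => (Y ω)^2 + (2*l) * Y ω + l^2 := by funext ω; ring
      have hA : Integrable (fun ω => Y ω^2 + 2*l*Y ω) P := hY2int.add (hYint.const_mul _)
      rw [this, integral_add hA (integrable_const _),
        integral_add hY2int (hYint.const_mul _), MeasureTheory.integral_const_mul, hσ2, hmean,
        integral_const]
      simp
    -- Markov step
    have hsub : {ω | t < Y ω} ⊆ {ω | (t + l)^2 ≤ (Y ω + l)^2} := by
      intro ω hω
      simp only [Set.mem_setOf_eq] at hω ⊢
      have h1 : t + l ≤ Y ω + l := by linarith
      exact pow_le_pow_left₀ htl.le h1 2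
    have hmarkov := mul_meas_ge_le_integral_of_nonneg
      (ae_of_all P fun ω => sq_nonneg (Y ω + l)) hint ((t + l)^2)
    rw [hintval] at hmarkov
    have hfin : P {ω | t < Y ω} ≠ ⊤ := measure_ne_top _ _
    have hmono : (P {ω | t < Y ω}).toReal ≤ (P {ω | (t + l)^2 ≤ (Y ω + l)^2}).toReal := by
      apply ENNReal.toReal_mono (measure_ne_top _ _) (measure_mono hsub)
    have hkey : (P {ω | t < Y ω}).toReal ≤ (σ2 + l^2) / (t + l)^2 := by
      rw [le_div_iff₀ (by positivity)]
      calc (P {ω | t < Y ω}).toReal * (t + l)^2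
          ≤ (P {ω | (t + l)^2 ≤ (Y ω + l)^2}).toReal * (t + l)^2 := by
            apply mul_le_mul_of_nonneg_right hmono (by positivity)
        _ = (t + l)^2 * (P {ω | (t + l)^2 ≤ (Y ω + l)^2}).toReal := mul_comm _ _
        _ ≤ σ2 + l^2 := hmarkov
    have hbound : (σ2 + l^2) / (t + l)^2 ≤ ε := by
      have hexp : (σ2 + l^2) / (t + l)^2 = σ2 / (t^2 + σ2) := by
        rw [hl]; field_simp
      rw [hexp, div_le_iff₀ (by positivity)]
      have h1 : (1 - ε) * σ2 ≤ ε * t^2 := by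
        rw [div_mul_eq_mul_div, div_le_iff₀ hε0] at htsq
        nlinarith [htsq]
      nlinarith
    have : (P {ω | t < Y ω}).toReal ≤ ε := le_trans hkey hbound
    calc P {ω | t < Y ω} = ENNReal.ofReal (P {ω | t < Y ω}).toReal :=
          (ENNReal.ofReal_toReal hfin).symm
      _ ≤ ENNReal.ofReal ε := ENNReal.ofReal_le_ofReal this


/-- joint half-space chance constraints with risk allocation.
If for every `j` in a finite index set `J` one has
`a_jᵀv̄ + b_j + √(((1−ε_j)/ε_j)·a_jᵀVa_j) ≤ 0` with `Σ_j ε_j ≤ ε`, then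
`P(a_jᵀv + b_j ≤ 0 for all j ∈ J) ≥ 1 − ε`. -/
theorem stmt_5 {n : ℕ} {Ω : Type*} [MeasurableSpace Ω]
    (P : Measure Ω) [IsProbabilityMeasure P]
    (v : Ω → Fin n → ℝ) (hvmeas : Measurable v)
    (hv2 : ∀ i, MemLp (fun ω => v ω i) 2 P)
    (vbar : Fin n → ℝ) (hvbar : ∀ i, vbar i = ∫ ω, v ω i ∂P)
    (V : Matrix (Fin n) (Fin n) ℝ)
    (hV : ∀ i j, V i j = ∫ ω, (v ω i - vbar i) * (v ω j - vbar j) ∂P)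
    {ι : Type*} (J : Finset ι) (a : ι → Fin n → ℝ) (b : ι → ℝ)
    (ε : ℝ) (hε0 : 0 < ε) (hε1 : ε < 1)
    (εj : ι → ℝ) (hεj : ∀ j ∈ J, 0 < εj j ∧ εj j < 1)
    (hεsum : ∑ j ∈ J, εj j ≤ ε)
    (hcc : ∀ j ∈ J,
      a j ⬝ᵥ vbar + b j + Real.sqrt ((1 - εj j) / εj j * (a j ⬝ᵥ (V *ᵥ a j))) ≤ 0) :
    ENNReal.ofReal (1 - ε) ≤ P {ω | ∀ j ∈ J, a j ⬝ᵥ v ω + b j ≤ 0} := by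
  classical
  set S : Set Ω := {ω | ∀ j ∈ J, a j ⬝ᵥ v ω + b j ≤ 0} with hS
  have hmeasdot : ∀ (c : Fin n → ℝ), Measurable (fun ω => c ⬝ᵥ v ω) := by
    intro c
    simp only [dotProduct]
    exact Finset.measurable_sum _ fun i _ =>
      measurable_const.mul ((measurable_pi_apply i).comp hvmeas)
  have hSm : MeasurableSet S := by
    have : S = ⋂ j ∈ J, {ω | a j ⬝ᵥ v ω + b j ≤ 0} := by
      ext ω; simp [hS]
    rw [this]
    exact MeasurableSet.biInter J.countable_toSet fun j _ =>
      measurableSet_le ((hmeasdot (a j)).add_const _) measurable_const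
  -- per-index bound via Cantelli
  have hsingle : ∀ j ∈ J, P {ω | ¬ (a j ⬝ᵥ v ω + b j ≤ 0)} ≤ ENNReal.ofReal (εj j) := by
    intro j hj
    obtain ⟨hj0, hj1⟩ := hεj j hj
    set c : Fin n → ℝ := a j with hc
    set Y : Ω → ℝ := fun ω => ∑ i, c i * (v ω i - vbar i) with hYdef
    have hfm : ∀ i : Fin n, MemLp (fun ω => v ω i - vbar i) 2 P :=
      fun i => (hv2 i).sub (memLp_const _)
    have hfint : ∀ i : Fin n, Integrable (fun ω => v ω i - vbar i) P :=
      fun i => (hfm i).integrable one_le_two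
    have hYmem : MemLp Y 2 P :=
      memLp_finset_sum Finset.univ (fun i _ => (hfm i).const_mul (c i))
    have hmean : ∫ ω, Y ω ∂P = 0 := by
      rw [hYdef, integral_finset_sum _ (fun i _ => (hfint i).const_mul (c i))]
      apply Finset.sum_eq_zero
      intro i _
      rw [MeasureTheory.integral_const_mul,
        integral_sub ((hv2 i).integrable one_le_two) (integrable_const _), integral_const]
      simp [hvbar i]
    have hprod : ∀ i k : Fin n,
        Integrable (fun ω => (v ω i - vbar i) * (v ω k - vbar k)) P := by
      intro i k
      have h := (hfm k).smul (hfm i) (p := 2) (q := 2) (r := 1)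
      exact memLp_one_iff_integrable.mp h
    have hσ2 : ∫ ω, (Y ω)^2 ∂P = c ⬝ᵥ (V *ᵥ c) := by
      have hexp : ∀ ω, (Y ω)^2
          = ∑ i, ∑ k, (c i * c k) * ((v ω i - vbar i) * (v ω k - vbar k)) := by
        intro ω
        rw [hYdef, sq, Finset.sum_mul_sum]
        exact Finset.sum_congr rfl fun i _ => Finset.sum_congr rfl fun k _ => by ring
      simp_rw [hexp]
      rw [integral_finset_sum _ (fun i _ =>
        integrable_finset_sum _ (fun k _ => (hprod i k).const_mul _))]
      have : ∀ i : Fin n,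
          ∫ ω, ∑ k, (c i * c k) * ((v ω i - vbar i) * (v ω k - vbar k)) ∂P
          = ∑ k, (c i * c k) * V i k := by
        intro i
        rw [integral_finset_sum _ (fun k _ => (hprod i k).const_mul _)]
        exact Finset.sum_congr rfl fun k _ => by
          rw [MeasureTheory.integral_const_mul, hV i k]
      simp_rw [this]
      simp only [dotProduct, mulVec, Finset.mul_sum]
      exact Finset.sum_congr rfl fun i _ => Finset.sum_congr rfl fun k _ => by
        ring
    have hYeq : ∀ ω, Y ω = c ⬝ᵥ v ω - c ⬝ᵥ vbar := by
      intro ω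
      rw [hYdef]
      simp only [dotProduct, mul_sub]
      rw [Finset.sum_sub_distrib]
    have hcc' := hcc j hj
    have ht : Real.sqrt ((1 - εj j) / εj j * (c ⬝ᵥ (V *ᵥ c))) ≤ -(c ⬝ᵥ vbar + b j) := by
      rw [hc]; linarith
    have hset : {ω | ¬ (a j ⬝ᵥ v ω + b j ≤ 0)} = {ω | -(c ⬝ᵥ vbar + b j) < Y ω} := by
      ext ω
      simp only [Set.mem_setOf_eq, not_le, hYeq ω, hc]
      constructor <;> intro h <;> linarith
    rw [hset]
    exact cantelli_aux P Y hYmem hmean hσ2 hj0 hj1 ht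
  -- union bound
  have hcompl : P Sᶜ ≤ ENNReal.ofReal ε := by
    have hsub : Sᶜ ⊆ ⋃ j ∈ J, {ω | ¬ (a j ⬝ᵥ v ω + b j ≤ 0)} := by
      intro ω hω
      simp only [hS, Set.mem_compl_iff, Set.mem_setOf_eq, not_forall] at hω
      obtain ⟨j, hj, hωj⟩ := hω
      exact Set.mem_biUnion hj hωj
    calc P Sᶜ ≤ P (⋃ j ∈ J, {ω | ¬ (a j ⬝ᵥ v ω + b j ≤ 0)}) := measure_mono hsub
      _ ≤ ∑ j ∈ J, P {ω | ¬ (a j ⬝ᵥ v ω + b j ≤ 0)} := measure_biUnion_finset_le J _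
      _ ≤ ∑ j ∈ J, ENNReal.ofReal (εj j) := Finset.sum_le_sum hsingle
      _ = ENNReal.ofReal (∑ j ∈ J, εj j) :=
          (ENNReal.ofReal_sum_of_nonneg fun j hj => (hεj j hj).1.le).symm
      _ ≤ ENNReal.ofReal ε := ENNReal.ofReal_le_ofReal hεsum
  have hsum1 : P S + P Sᶜ = 1 := by
    rw [measure_add_measure_compl hSm, measure_univ]
  have hmain : ENNReal.ofReal (1 - ε) + P Sᶜ ≤ P S + P Sᶜ := by
    calc ENNReal.ofReal (1 - ε) + P Sᶜ
        ≤ ENNReal.ofReal (1 - ε) + ENNReal.ofReal ε := by gcongr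
      _ = ENNReal.ofReal 1 := by rw [← ENNReal.ofReal_add (by linarith) hε0.le]; norm_num
      _ = 1 := ENNReal.ofReal_one
      _ = P S + P Sᶜ := hsum1.symm
  exact ENNReal.le_of_add_le_add_right (measure_ne_top P Sᶜ) hmain
end

section
/- Define the next-state partial means q'(j) := E[x'·1_{r'=j}] for j ∈ S. Then q'(j) = Σ_{i∈S} p_{ij}·( A(i) q(i) + ρ(i)·(B(i) ū(i) + c) ), i.e., the partial means of a Markov jump linear system under mode-dependent affine feedback propagate according to this affine recursion (the feedback-gain terms K(i) cancel). -/
open MeasureTheory Matrix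

lemma aux_int_mulVec {Ω : Type*} [MeasurableSpace Ω] (P : Measure Ω) {n m : ℕ}
    (M : Matrix (Fin n) (Fin m) ℝ)
    (v : Ω → Fin m → ℝ) (hv : ∀ l, Integrable (fun ω => v ω l) P) (k : Fin n) :
    Integrable (fun ω => (M *ᵥ v ω) k) P := by
  simp only [mulVec, dotProduct]
  exact integrable_finset_sum _ fun l _ => (hv l).const_mul _

lemma aux_setInt_mulVec {Ω : Type*} [MeasurableSpace Ω] (P : Measure Ω) {n m : ℕ}
    (M : Matrix (Fin n) (Fin m) ℝ)
    (v : Ω → Fin m → ℝ) (s : Set Ω) (hv : ∀ l, IntegrableOn (fun ω => v ω l) s P) (k : Fin n) :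
    ∫ ω in s, (M *ᵥ v ω) k ∂P = ∑ l, M k l * ∫ ω in s, v ω l ∂P := by
  simp only [mulVec, dotProduct]
  rw [integral_finset_sum _ fun l _ => (hv l).const_mul _]
  exact Finset.sum_congr rfl fun l _ => integral_const_mul _ _

/-- mean propagation of MJLS, Eq. (5) in the paper. Under the
mode-dependent affine feedback, the next-state partial means
`q'(j) = E[x'·1_{r'=j}]` satisfy the affine recursion
`q'(j) = Σ_i p_{ij}·( A(i) q(i) + ρ(i)·(B(i) ū(i) + c) )`
(the feedback-gain terms `K(i)` cancel). -/
theorem stmt_16 {nx nu nw N : ℕ} {Ω : Type*} [MeasurableSpace Ω]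
    (P : Measure Ω) [IsProbabilityMeasure P]
    (p : Fin N → Fin N → ℝ) (hp : ∀ i j, 0 ≤ p i j) (hp1 : ∀ i, ∑ j, p i j = 1)
    (x : Ω → Fin nx → ℝ) (hxmeas : Measurable x)
    (hx2 : ∀ k, MemLp (fun ω => x ω k) 2 P)
    (r r' : Ω → Fin N) (hrmeas : Measurable r) (hr'meas : Measurable r')
    (ρ : Fin N → ℝ) (hρ : ∀ i, ρ i = (P {ω | r ω = i}).toReal)
    (hρpos : ∀ i, 0 < ρ i)
    (q : Fin N → Fin nx → ℝ)
    (hq : ∀ i k, q i k = ∫ ω in {ω | r ω = i}, x ω k ∂P)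
    (xbar : Fin N → Fin nx → ℝ) (hxbar : ∀ i, xbar i = (ρ i)⁻¹ • q i)
    (w : Ω → Fin nw → ℝ) (hwmeas : Measurable w)
    (hw1 : ∀ k, Integrable (fun ω => w ω k) P)
    (A : Fin N → Matrix (Fin nx) (Fin nx) ℝ)
    (B : Fin N → Matrix (Fin nx) (Fin nu) ℝ)
    (G : Fin N → Matrix (Fin nx) (Fin nw) ℝ)
    (K : Fin N → Matrix (Fin nu) (Fin nx) ℝ)
    (ubar : Fin N → Fin nu → ℝ) (c : Fin nx → ℝ)
    (x' : Ω → Fin nx → ℝ)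
    (hx' : ∀ ω, x' ω = A (r ω) *ᵥ x ω
        + B (r ω) *ᵥ (ubar (r ω) + K (r ω) *ᵥ (x ω - xbar (r ω)))
        + c + G (r ω) *ᵥ w ω)
    -- Markov property and independence of the noise:
    (hjoint : ∀ i j,
      (P ({ω | r ω = i} ∩ {ω | r' ω = j})).toReal = p i j * ρ i)
    (hxjoint : ∀ i j k,
      ∫ ω in {ω | r ω = i} ∩ {ω | r' ω = j}, x ω k ∂P = p i j * q i k)
    (hwjoint : ∀ i j k,
      ∫ ω in {ω | r ω = i} ∩ {ω | r' ω = j}, w ω k ∂P = 0) :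
    ∀ j k, ∫ ω in {ω | r' ω = j}, x' ω k ∂P
      = ∑ i, p i j * ((A i *ᵥ q i) k + ρ i * ((B i *ᵥ ubar i) k + c k)) := by
  intro j k
  have hxint : ∀ l, Integrable (fun ω => x ω l) P :=
    fun l => (hx2 l).integrable one_le_two
  have hSr : ∀ i : Fin N, MeasurableSet {ω | r ω = i} :=
    fun i => hrmeas (measurableSet_singleton i)
  have hS' : MeasurableSet {ω | r' ω = j} := hr'meas (measurableSet_singleton j)
  set S : Fin N → Set Ω := fun i => {ω | r ω = i} ∩ {ω | r' ω = j} with hSdef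
  have hSmeas : ∀ i, MeasurableSet (S i) := fun i => (hSr i).inter hS'
  have hdisj : Pairwise (Function.onFun Disjoint S) := by
    intro i i' hii'
    refine Set.disjoint_left.2 fun ω hω hω' => hii' ?_
    rw [← hω.1, ← hω'.1]
  have hunion : {ω | r' ω = j} = ⋃ i, S i := by
    ext ω
    simp only [Set.mem_iUnion, Set.mem_inter_iff, Set.mem_setOf_eq, hSdef]
    exact ⟨fun h => ⟨r ω, rfl, h⟩, fun ⟨i, _, h⟩ => h⟩
  -- the per-mode expression
  set g : Fin N → Ω → ℝ := fun i ω =>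
    (A i *ᵥ x ω) k + ((B i *ᵥ ubar i) k + (B i *ᵥ K i *ᵥ x ω) k
      - (B i *ᵥ K i *ᵥ xbar i) k) + c k + (G i *ᵥ w ω) k with hgdef
  have hg_eq : ∀ i ω, r ω = i → x' ω k = g i ω := by
    intro i ω h
    rw [hx', h, hgdef]
    simp only [mulVec_add, mulVec_sub, Pi.add_apply, Pi.sub_apply]
    ring
  have hKxint : ∀ i l, Integrable (fun ω => (K i *ᵥ x ω) l) P :=
    fun i l => aux_int_mulVec P (K i) x hxint l
  have hgint : ∀ i, Integrable (g i) P := by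
    intro i
    exact (((aux_int_mulVec P (A i) x hxint k).add
      (((integrable_const _).add (aux_int_mulVec P (B i) _ (hKxint i) k)).sub
        (integrable_const _))).add (integrable_const _)).add
      (aux_int_mulVec P (G i) w hw1 k)
  have hx'int : Integrable (fun ω => x' ω k) P := by
    have he : (fun ω => x' ω k) = fun ω => ∑ i, ({ω' | r ω' = i}).indicator (g i) ω := by
      funext ω
      rw [Finset.sum_eq_single (r ω)]
      · rw [Set.indicator_of_mem (by exact rfl), hg_eq (r ω) ω rfl]
      · intro i _ hi
        exact Set.indicator_of_notMem (fun h => hi h.symm) _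
      · intro h; exact absurd (Finset.mem_univ _) h
    rw [he]
    exact integrable_finset_sum _ fun i _ => (hgint i).indicator (hSr i)
  rw [hunion, integral_iUnion hSmeas hdisj hx'int.integrableOn, tsum_fintype]
  refine Finset.sum_congr rfl fun i _ => ?_
  have hcongr : ∫ ω in S i, x' ω k ∂P = ∫ ω in S i, g i ω ∂P := by
    exact setIntegral_congr_fun (hSmeas i) fun ω hω => hg_eq i ω hω.1
  rw [hcongr, hgdef]
  have hxon : ∀ l, IntegrableOn (fun ω => x ω l) (S i) P := fun l => (hxint l).integrableOn
  have hKxon : ∀ l, IntegrableOn (fun ω => (K i *ᵥ x ω) l) (S i) P :=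
    fun l => (hKxint i l).integrableOn
  have hwon : ∀ l, IntegrableOn (fun ω => w ω l) (S i) P := fun l => (hw1 l).integrableOn
  have iA : ∫ ω in S i, (A i *ᵥ x ω) k ∂P = p i j * (A i *ᵥ q i) k := by
    rw [aux_setInt_mulVec P (A i) x (S i) hxon k]
    simp only [hxjoint i j, mulVec, dotProduct, Finset.mul_sum]
    exact Finset.sum_congr rfl fun l _ => by rw [show ∫ ω in S i, x ω l ∂P = p i j * q i l from hxjoint i j l]; ring
  have iKx : ∀ l, ∫ ω in S i, (K i *ᵥ x ω) l ∂P = p i j * (K i *ᵥ q i) l := by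
    intro l
    rw [aux_setInt_mulVec P (K i) x (S i) hxon l]
    simp only [hxjoint i j, mulVec, dotProduct, Finset.mul_sum]
    exact Finset.sum_congr rfl fun l' _ => by rw [show ∫ ω in S i, x ω l' ∂P = p i j * q i l' from hxjoint i j l']; ring
  have iBKx : ∫ ω in S i, (B i *ᵥ K i *ᵥ x ω) k ∂P = p i j * (B i *ᵥ K i *ᵥ q i) k := by
    rw [aux_setInt_mulVec P (B i) _ (S i) hKxon k]
    simp only [iKx]
    simp only [mulVec, dotProduct, Finset.mul_sum]
    refine Finset.sum_congr rfl fun l _ => ?_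
    exact Finset.sum_congr rfl fun l' _ => by ring
  have iG : ∫ ω in S i, (G i *ᵥ w ω) k ∂P = 0 := by
    rw [aux_setInt_mulVec P (G i) w (S i) hwon k]
    simp [show ∀ l, ∫ ω in S i, w ω l ∂P = 0 from hwjoint i j]
  have imeas : (P (S i)).toReal = p i j * ρ i := hjoint i j
  have iconst : ∀ b : ℝ, ∫ _ω in S i, b ∂P = p i j * ρ i * b := by
    intro b
    rw [setIntegral_const, measureReal_def, imeas, smul_eq_mul]
  have hsplit : ∫ ω in S i, ((A i *ᵥ x ω) k + ((B i *ᵥ ubar i) k + (B i *ᵥ K i *ᵥ x ω) k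
      - (B i *ᵥ K i *ᵥ xbar i) k) + c k + (G i *ᵥ w ω) k) ∂P
      = ∫ ω in S i, (A i *ᵥ x ω) k ∂P
      + (∫ _ω in S i, (B i *ᵥ ubar i) k ∂P + ∫ ω in S i, (B i *ᵥ K i *ᵥ x ω) k ∂P
        - ∫ _ω in S i, (B i *ᵥ K i *ᵥ xbar i) k ∂P)
      + ∫ _ω in S i, c k ∂P + ∫ ω in S i, (G i *ᵥ w ω) k ∂P := by
    rw [integral_add, integral_add, integral_add, integral_sub, integral_add]
    · exact (integrable_const _).integrableOn
    · exact (aux_int_mulVec P (B i) _ (hKxint i) k).integrableOn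
    · exact ((integrable_const _).add (aux_int_mulVec P (B i) _ (hKxint i) k)).integrableOn
    · exact (integrable_const _).integrableOn
    · exact (aux_int_mulVec P (A i) x hxint k).integrableOn
    · exact (((integrable_const _).add
        (aux_int_mulVec P (B i) _ (hKxint i) k)).sub (integrable_const _)).integrableOn
    · exact ((aux_int_mulVec P (A i) x hxint k).add (((integrable_const _).add
        (aux_int_mulVec P (B i) _ (hKxint i) k)).sub (integrable_const _))).integrableOn
    · exact (integrable_const _).integrableOn
    · exact (((aux_int_mulVec P (A i) x hxint k).add (((integrable_const _).add
        (aux_int_mulVec P (B i) _ (hKxint i) k)).sub (integrable_const _))).add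
        (integrable_const _)).integrableOn
    · exact (aux_int_mulVec P (G i) w hw1 k).integrableOn
  rw [hsplit, iA, iBKx, iG, iconst, iconst, iconst]
  have hcancel : (B i *ᵥ K i *ᵥ xbar i) k * ρ i = (B i *ᵥ K i *ᵥ q i) k := by
    rw [hxbar i]
    have : K i *ᵥ (ρ i)⁻¹ • q i = (ρ i)⁻¹ • (K i *ᵥ q i) := mulVec_smul _ _ _
    rw [this, mulVec_smul]
    simp only [Pi.smul_apply, smul_eq_mul]
    have hne : ρ i ≠ 0 := (hρpos i).ne'
    field_simp
  linear_combination (-(p i j)) * hcancel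
end

section
/- Define ρ'(j) := Σ_{i∈S} p_{ij} ρ(i) (assumed positive for all j), q'(j) := E[x'·1_{r'=j}], x̄'(j) := q'(j)/ρ'(j), and the next-step partial covariances S'(j) := E[(x' − x̄'(j))(x' − x̄'(j))ᵀ·1_{r'=j}]. Then for every j ∈ S, S'(j) = Σ_{i∈S} p_{ij}·[ A(i) S(i) A(i)ᵀ + A(i) S(i) K(i)ᵀ B(i)ᵀ + B(i) K(i) S(i) A(i)ᵀ + B(i) K(i) S(i) K(i)ᵀ B(i)ᵀ + ρ(i)·( (A(i) x̄(i) + B(i) ū(i) + c)(A(i) x̄(i) + B(i) ū(i) + c)ᵀ + G(i) G(i)ᵀ ) ] − ρ'(j)·x̄'(j) x̄'(j)ᵀ. In particular, the terms involving the conditional means x̄(i) do not cancel, so the covariance propagation of a Markov jump linear system is coupled to its mean trajectory. -/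
open MeasureTheory Matrix

private lemma memLp_two_integrable_mul {Ω : Type*} [MeasurableSpace Ω] {P : Measure Ω}
    {f g : Ω → ℝ} (hf : MemLp f 2 P) (hg : MemLp g 2 P) :
    Integrable (fun ω => f ω * g ω) P := by
  have h := hg.smul (r := 1) hf (hpqr := ⟨by norm_num [ENNReal.inv_two_add_inv_two]⟩)
  rw [← memLp_one_iff_integrable]
  exact h

private lemma bilin_integral {Ω : Type*} [MeasurableSpace Ω] (P : Measure Ω)
    {ι κ : Type*} [Fintype ι] [Fintype κ] (s : Set Ω)
    (cc : ι → ℝ) (d : κ → ℝ) (u : ι → Ω → ℝ) (v : κ → Ω → ℝ)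
    (h : ∀ a b, Integrable (fun ω => u a ω * v b ω) P) :
    ∫ ω in s, (∑ a, cc a * u a ω) * (∑ b, d b * v b ω) ∂P
      = ∑ a, ∑ b, cc a * d b * ∫ ω in s, u a ω * v b ω ∂P := by
  have hpt : ∀ ω, (∑ a, cc a * u a ω) * (∑ b, d b * v b ω)
      = ∑ a, ∑ b, cc a * d b * (u a ω * v b ω) := by
    intro ω
    rw [Finset.sum_mul_sum]
    exact Finset.sum_congr rfl fun a _ => Finset.sum_congr rfl fun b _ => by ring
  simp_rw [hpt]
  rw [integral_finset_sum _ (fun a _ => integrable_finset_sum _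
    (fun b _ => ((h a b).const_mul _).integrableOn))]
  refine Finset.sum_congr rfl fun a _ => ?_
  rw [integral_finset_sum _ (fun b _ => ((h a b).const_mul _).integrableOn)]
  exact Finset.sum_congr rfl fun b _ => integral_const_mul _ _

private lemma expand_integral {Ω : Type*} [MeasurableSpace Ω] (P : Measure Ω)
    (s : Set Ω) (f g : Ω → ℝ) (cf cg : ℝ)
    (hf : Integrable f P) (hg : Integrable g P)
    (hfg : Integrable (fun ω => f ω * g ω) P) (hμ : P s ≠ ⊤) :
    ∫ ω in s, (f ω - cf) * (g ω - cg) ∂P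
      = ∫ ω in s, f ω * g ω ∂P - cg * ∫ ω in s, f ω ∂P
        - cf * ∫ ω in s, g ω ∂P + cf * cg * (P s).toReal := by
  have hpt : ∀ ω, (f ω - cf) * (g ω - cg)
      = f ω * g ω - cg * f ω - cf * g ω + cf * cg := fun ω => by ring
  simp_rw [hpt]
  have I2 : Integrable (fun ω => f ω * g ω - cg * f ω) (P.restrict s) :=
    hfg.integrableOn.sub ((hf.const_mul cg).integrableOn)
  have I1 : Integrable (fun ω => f ω * g ω - cg * f ω - cf * g ω) (P.restrict s) :=
    I2.sub ((hg.const_mul cf).integrableOn)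
  rw [integral_add I1 (integrableOn_const hμ),
    integral_sub I2 ((hg.const_mul cf).integrableOn),
    integral_sub hfg.integrableOn ((hf.const_mul cg).integrableOn),
    integral_const_mul, integral_const_mul, setIntegral_const]
  simp only [smul_eq_mul, measureReal_def]
  ring


/-- covariance propagation of MJLS, Eq. (6)/(13) in the paper.
Under the mode-dependent affine feedback, the next-step partial covariances
`S'(j) = E[(x' − x̄'(j))(x' − x̄'(j))ᵀ·1_{r'=j}]` satisfy
`S'(j) = Σ_i p_{ij}·[ A(i) S(i) A(i)ᵀ + A(i) S(i) K(i)ᵀ B(i)ᵀ + B(i) K(i) S(i) A(i)ᵀ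
  + B(i) K(i) S(i) K(i)ᵀ B(i)ᵀ
  + ρ(i)·( (A(i) x̄(i) + B(i) ū(i) + c)(A(i) x̄(i) + B(i) ū(i) + c)ᵀ + G(i) G(i)ᵀ ) ]
  − ρ'(j)·x̄'(j) x̄'(j)ᵀ`;
in particular the terms involving the conditional means `x̄(i)` do not cancel, so the
covariance propagation is coupled to the mean trajectory. -/
theorem stmt_17 {nx nu nw N : ℕ} {Ω : Type*} [MeasurableSpace Ω]
    (P : Measure Ω) [IsProbabilityMeasure P]
    (p : Fin N → Fin N → ℝ) (hp : ∀ i j, 0 ≤ p i j) (hp1 : ∀ i, ∑ j, p i j = 1)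
    (x : Ω → Fin nx → ℝ) (hxmeas : Measurable x)
    (hx2 : ∀ k, MemLp (fun ω => x ω k) 2 P)
    (r r' : Ω → Fin N) (hrmeas : Measurable r) (hr'meas : Measurable r')
    (ρ : Fin N → ℝ) (hρ : ∀ i, ρ i = (P {ω | r ω = i}).toReal)
    (hρpos : ∀ i, 0 < ρ i)
    (q : Fin N → Fin nx → ℝ)
    (hq : ∀ i k, q i k = ∫ ω in {ω | r ω = i}, x ω k ∂P)
    (xbar : Fin N → Fin nx → ℝ) (hxbar : ∀ i, xbar i = (ρ i)⁻¹ • q i)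
    (Sc : Fin N → Matrix (Fin nx) (Fin nx) ℝ)
    (hSc : ∀ i k l, Sc i k l
      = ∫ ω in {ω | r ω = i}, (x ω k - xbar i k) * (x ω l - xbar i l) ∂P)
    (w : Ω → Fin nw → ℝ) (hwmeas : Measurable w)
    (hw2 : ∀ k, MemLp (fun ω => w ω k) 2 P)
    (A : Fin N → Matrix (Fin nx) (Fin nx) ℝ)
    (B : Fin N → Matrix (Fin nx) (Fin nu) ℝ)
    (G : Fin N → Matrix (Fin nx) (Fin nw) ℝ)
    (K : Fin N → Matrix (Fin nu) (Fin nx) ℝ)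
    (ubar : Fin N → Fin nu → ℝ) (c : Fin nx → ℝ)
    (x' : Ω → Fin nx → ℝ)
    (hx' : ∀ ω, x' ω = A (r ω) *ᵥ x ω
        + B (r ω) *ᵥ (ubar (r ω) + K (r ω) *ᵥ (x ω - xbar (r ω)))
        + c + G (r ω) *ᵥ w ω)
    -- Markov property and white-noise independence:
    (hjoint : ∀ i j,
      (P ({ω | r ω = i} ∩ {ω | r' ω = j})).toReal = p i j * ρ i)
    (hxjoint : ∀ i j k,
      ∫ ω in {ω | r ω = i} ∩ {ω | r' ω = j}, x ω k ∂P = p i j * q i k)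
    (hxxjoint : ∀ i j k l,
      ∫ ω in {ω | r ω = i} ∩ {ω | r' ω = j}, x ω k * x ω l ∂P
        = p i j * ∫ ω in {ω | r ω = i}, x ω k * x ω l ∂P)
    (hwjoint : ∀ i j k,
      ∫ ω in {ω | r ω = i} ∩ {ω | r' ω = j}, w ω k ∂P = 0)
    (hwxjoint : ∀ i j k l,
      ∫ ω in {ω | r ω = i} ∩ {ω | r' ω = j}, w ω k * x ω l ∂P = 0)
    (hwwjoint : ∀ i j k l,
      ∫ ω in {ω | r ω = i} ∩ {ω | r' ω = j}, w ω k * w ω l ∂P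
        = p i j * ρ i * (1 : Matrix (Fin nw) (Fin nw) ℝ) k l)
    -- next-step quantities:
    (ρ' : Fin N → ℝ) (hρ' : ∀ j, ρ' j = ∑ i, p i j * ρ i)
    (hρ'pos : ∀ j, 0 < ρ' j)
    (q' : Fin N → Fin nx → ℝ)
    (hq' : ∀ j k, q' j k = ∫ ω in {ω | r' ω = j}, x' ω k ∂P)
    (xbar' : Fin N → Fin nx → ℝ) (hxbar' : ∀ j, xbar' j = (ρ' j)⁻¹ • q' j)
    (S' : Fin N → Matrix (Fin nx) (Fin nx) ℝ)
    (hS' : ∀ j k l, S' j k l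
      = ∫ ω in {ω | r' ω = j}, (x' ω k - xbar' j k) * (x' ω l - xbar' j l) ∂P) :
    ∀ j, S' j
      = ∑ i, p i j •
          (A i * Sc i * (A i)ᵀ + A i * Sc i * (K i)ᵀ * (B i)ᵀ
            + B i * K i * Sc i * (A i)ᵀ + B i * K i * Sc i * (K i)ᵀ * (B i)ᵀ
            + ρ i • (vecMulVec (A i *ᵥ xbar i + B i *ᵥ ubar i + c)
                        (A i *ᵥ xbar i + B i *ᵥ ubar i + c)
                      + G i * (G i)ᵀ))
        - ρ' j • vecMulVec (xbar' j) (xbar' j) := by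
  intro j
  have hRi : ∀ i : Fin N, MeasurableSet {ω | r ω = i} :=
    fun i => hrmeas (MeasurableSet.singleton i)
  have hRj : MeasurableSet {ω | r' ω = j} := hr'meas (MeasurableSet.singleton j)
  set M : Fin N → Matrix (Fin nx) (Fin nx) ℝ := fun i => A i + B i * K i with hMdef
  set bb : Fin N → Fin nx → ℝ := fun i => B i *ᵥ ubar i - (B i * K i) *ᵥ xbar i + c with hbdef
  have hx'vec : ∀ ω, x' ω = M (r ω) *ᵥ x ω + bb (r ω) + G (r ω) *ᵥ w ω := by
    intro ω
    rw [hx' ω]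
    simp only [hMdef, hbdef, Matrix.add_mulVec, Matrix.mulVec_add, Matrix.mulVec_sub,
      ← Matrix.mulVec_mulVec]
    abel
  have hx'eq : ∀ ω k, x' ω k
      = ∑ a, M (r ω) k a * x ω a + bb (r ω) k + ∑ a, G (r ω) k a * w ω a := by
    intro ω k
    rw [hx'vec ω]
    simp [Matrix.mulVec, dotProduct]
  have hy2 : ∀ (i : Fin N) (k : Fin nx),
      MemLp (fun ω => ∑ a, M i k a * x ω a + bb i k + ∑ a, G i k a * w ω a) 2 P := by
    intro i k
    exact ((memLp_finset_sum _ fun a _ => (hx2 a).const_mul _).add (memLp_const _)).add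
      (memLp_finset_sum _ fun a _ => (hw2 a).const_mul _)
  have hx'2 : ∀ k, MemLp (fun ω => x' ω k) 2 P := by
    intro k
    have heq : (fun ω => x' ω k)
        = fun ω => ∑ i, Set.indicator {ω | r ω = i}
            (fun ω => ∑ a, M i k a * x ω a + bb i k + ∑ a, G i k a * w ω a) ω := by
      funext ω
      rw [Finset.sum_eq_single (r ω)]
      · rw [Set.indicator_of_mem (show ω ∈ {ω' | r ω' = r ω} from rfl)]
        exact hx'eq ω k
      · intro i _ hne
        apply Set.indicator_of_notMem
        exact fun h => hne ((h : r ω = i).symm)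
      · intro h
        exact absurd (Finset.mem_univ _) h
    rw [heq]
    exact memLp_finset_sum _ fun i _ => (hy2 i k).indicator (hRi i)
  have hx1 : ∀ a, Integrable (fun ω => x ω a) P := fun a => (hx2 a).integrable one_le_two
  have hw1 : ∀ a, Integrable (fun ω => w ω a) P := fun a => (hw2 a).integrable one_le_two
  have hxx : ∀ a b, Integrable (fun ω => x ω a * x ω b) P :=
    fun a b => memLp_two_integrable_mul (hx2 a) (hx2 b)
  have hx'1 : ∀ k, Integrable (fun ω => x' ω k) P := fun k => (hx'2 k).integrable one_le_two
  have hx'x' : ∀ k l, Integrable (fun ω => x' ω k * x' ω l) P :=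
    fun k l => memLp_two_integrable_mul (hx'2 k) (hx'2 l)
  have hdisj : Pairwise (Function.onFun Disjoint
      fun i : Fin N => {ω | r ω = i} ∩ {ω | r' ω = j}) := by
    intro i1 i2 hne
    simp only [Function.onFun, Set.disjoint_left]
    rintro ω ⟨h1, -⟩ ⟨h2, -⟩
    exact hne ((h1 : r ω = i1).symm.trans (h2 : r ω = i2))
  have hmeas_s : ∀ i, MeasurableSet ({ω | r ω = i} ∩ {ω | r' ω = j}) :=
    fun i => (hRi i).inter hRj
  have hUnion : {ω | r' ω = j} = ⋃ i, ({ω | r ω = i} ∩ {ω | r' ω = j}) := by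
    ext ω
    simp only [Set.mem_iUnion, Set.mem_inter_iff, Set.mem_setOf_eq]
    exact ⟨fun h => ⟨r ω, rfl, h⟩, fun ⟨i, _, h⟩ => h⟩
  have hsplit : ∀ f : Ω → ℝ, Integrable f P →
      ∫ ω in {ω | r' ω = j}, f ω ∂P
        = ∑ i, ∫ ω in {ω | r ω = i} ∩ {ω | r' ω = j}, f ω ∂P := by
    intro f hf
    conv_lhs => rw [hUnion]
    rw [integral_iUnion hmeas_s hdisj hf.integrableOn, tsum_fintype]
  have hPj : (P {ω | r' ω = j}).toReal = ρ' j := by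
    rw [hUnion, measure_iUnion hdisj hmeas_s, tsum_fintype,
      ENNReal.toReal_sum (fun i _ => measure_ne_top P _), hρ' j]
    exact Finset.sum_congr rfl fun i _ => hjoint i j
  have hq'x : ∀ k, q' j k = ρ' j * xbar' j k := by
    intro k
    rw [hxbar' j]
    simp only [Pi.smul_apply, smul_eq_mul]
    rw [← mul_assoc, mul_inv_cancel₀ (hρ'pos j).ne', one_mul]
  have hqx : ∀ (i : Fin N) a, q i a = ρ i * xbar i a := by
    intro i a
    rw [hxbar i]
    simp only [Pi.smul_apply, smul_eq_mul]
    rw [← mul_assoc, mul_inv_cancel₀ (hρpos i).ne', one_mul]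
  have hqi : ∀ (i : Fin N) a, ∫ ω in {ω | r ω = i}, x ω a ∂P = ρ i * xbar i a := by
    intro i a
    rw [← hq i a]
    exact hqx i a
  have hEi : ∀ (i : Fin N) a b, ∫ ω in {ω | r ω = i}, x ω a * x ω b ∂P
      = Sc i a b + ρ i * (xbar i a * xbar i b) := by
    intro i a b
    have h := hSc i a b
    rw [expand_integral P _ _ _ _ _ (hx1 a) (hx1 b) (hxx a b) (measure_ne_top P _),
      hqi i a, hqi i b, ← hρ i] at h
    linear_combination -h
  have hMSM : ∀ i : Fin N, M i * Sc i * (M i)ᵀ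
      = A i * Sc i * (A i)ᵀ + A i * Sc i * (K i)ᵀ * (B i)ᵀ
        + B i * K i * Sc i * (A i)ᵀ + B i * K i * Sc i * (K i)ᵀ * (B i)ᵀ := by
    intro i
    simp only [hMdef, Matrix.transpose_add, Matrix.transpose_mul, Matrix.add_mul,
      Matrix.mul_add, Matrix.mul_assoc]
    abel
  have hmvec : ∀ i : Fin N, M i *ᵥ xbar i + bb i = A i *ᵥ xbar i + B i *ᵥ ubar i + c := by
    intro i
    simp only [hMdef, hbdef, Matrix.add_mulVec]
    abel
  ext k l
  have hcore : ∀ i : Fin N,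
      ∫ ω in {ω | r ω = i} ∩ {ω | r' ω = j}, x' ω k * x' ω l ∂P
        = p i j * ((A i * Sc i * (A i)ᵀ + A i * Sc i * (K i)ᵀ * (B i)ᵀ
            + B i * K i * Sc i * (A i)ᵀ + B i * K i * Sc i * (K i)ᵀ * (B i)ᵀ
            + ρ i • (vecMulVec (A i *ᵥ xbar i + B i *ᵥ ubar i + c)
                (A i *ᵥ xbar i + B i *ᵥ ubar i + c) + G i * (G i)ᵀ)) k l) := by
    intro i
    rw [← hMSM i, ← hmvec i]
    set Z : (Fin nx ⊕ (Fin nw ⊕ Unit)) → Ω → ℝ :=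
      fun t ω => Sum.elim (fun a => x ω a) (Sum.elim (fun a => w ω a) fun _ => (1:ℝ)) t with hZ
    set C : Fin nx → (Fin nx ⊕ (Fin nw ⊕ Unit)) → ℝ :=
      fun kk => Sum.elim (fun a => M i kk a)
        (Sum.elim (fun a => G i kk a) fun _ => bb i kk) with hC
    set Jm : (Fin nx ⊕ (Fin nw ⊕ Unit)) → (Fin nx ⊕ (Fin nw ⊕ Unit)) → ℝ :=
      fun t u => match t, u with
        | .inl a, .inl b => Sc i a b + ρ i * (xbar i a * xbar i b)
        | .inl a, .inr (.inr _) => ρ i * xbar i a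
        | .inr (.inr _), .inl b => ρ i * xbar i b
        | .inr (.inl a), .inr (.inl b) => ρ i * (1 : Matrix (Fin nw) (Fin nw) ℝ) a b
        | .inr (.inr _), .inr (.inr _) => ρ i
        | _, _ => 0 with hJm
    have hzsum : ∀ (kk : Fin nx) (ω : Ω),
        ∑ a, M i kk a * x ω a + bb i kk + ∑ a, G i kk a * w ω a = ∑ t, C kk t * Z t ω := by
      intro kk ω
      rw [Fintype.sum_sum_type, Fintype.sum_sum_type]
      simp only [hC, hZ, Sum.elim_inl, Sum.elim_inr, Finset.univ_unique,
        Finset.sum_singleton, mul_one]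
      ring
    have hcongr : ∫ ω in {ω | r ω = i} ∩ {ω | r' ω = j}, x' ω k * x' ω l ∂P
        = ∫ ω in {ω | r ω = i} ∩ {ω | r' ω = j},
            (∑ t, C k t * Z t ω) * (∑ u, C l u * Z u ω) ∂P := by
      refine setIntegral_congr_fun (hmeas_s i) fun ω hω => ?_
      have hri : r ω = i := hω.1
      rw [hx'eq ω k, hx'eq ω l, hri, hzsum k ω, hzsum l ω]
    have hzint : ∀ t u, Integrable (fun ω => Z t ω * Z u ω) P := by
      rintro (a | (a | _)) (b | (b | _)) <;>
        simp only [hZ, Sum.elim_inl, Sum.elim_inr, mul_one, one_mul] <;>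
        first
          | exact memLp_two_integrable_mul (hx2 a) (hx2 b)
          | exact memLp_two_integrable_mul (hx2 a) (hw2 b)
          | exact memLp_two_integrable_mul (hw2 a) (hx2 b)
          | exact memLp_two_integrable_mul (hw2 a) (hw2 b)
          | exact hx1 a
          | exact hx1 b
          | exact hw1 a
          | exact hw1 b
          | exact integrable_const 1
    have hJ : ∀ t u, ∫ ω in {ω | r ω = i} ∩ {ω | r' ω = j}, Z t ω * Z u ω ∂P
        = p i j * Jm t u := by
      rintro (a | (a | _)) (b | (b | _))
      · simp only [hZ, hJm, Sum.elim_inl]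
        rw [hxxjoint i j a b, hEi i a b]
      · simp only [hZ, hJm, Sum.elim_inl, Sum.elim_inr, mul_zero]
        rw [show (fun ω => x ω a * w ω b) = fun ω => w ω b * x ω a from
          funext fun ω => mul_comm _ _]
        exact hwxjoint i j b a
      · simp only [hZ, hJm, Sum.elim_inl, Sum.elim_inr, mul_one]
        rw [hxjoint i j a, hqx i a]
      · simp only [hZ, hJm, Sum.elim_inl, Sum.elim_inr, mul_zero]
        exact hwxjoint i j a b
      · simp only [hZ, hJm, Sum.elim_inl, Sum.elim_inr]
        rw [hwwjoint i j a b]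
        ring
      · simp only [hZ, hJm, Sum.elim_inl, Sum.elim_inr, mul_one, mul_zero]
        exact hwjoint i j a
      · simp only [hZ, hJm, Sum.elim_inl, Sum.elim_inr, one_mul]
        rw [hxjoint i j b, hqx i b]
      · simp only [hZ, hJm, Sum.elim_inl, Sum.elim_inr, one_mul, mul_zero]
        exact hwjoint i j b
      · simp only [hZ, hJm, Sum.elim_inr, mul_one]
        rw [setIntegral_const, measureReal_def, hjoint i j, smul_eq_mul, mul_one]
    rw [hcongr, bilin_integral P _ (C k) (C l) Z Z hzint]
    simp only [hJ]
    simp only [Fintype.sum_sum_type, hC, hJm, Sum.elim_inl, Sum.elim_inr,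
      Finset.univ_unique, Finset.sum_singleton, mul_zero, Finset.sum_const_zero,
      add_zero, zero_add, Matrix.add_apply, Matrix.smul_apply, smul_eq_mul,
      Matrix.vecMulVec_apply, Pi.add_apply, Matrix.mul_apply, Matrix.transpose_apply,
      Matrix.mulVec, dotProduct]
    rw [Finset.sum_add_distrib]
    have hL1 : (∑ a : Fin nx, ∑ b : Fin nx,
          M i k a * M i l b * (p i j * (Sc i a b + ρ i * (xbar i a * xbar i b))))
        = p i j * (∑ a, (∑ b, M i k b * Sc i b a) * M i l a)
          + p i j * (ρ i * ((∑ a, M i k a * xbar i a) * (∑ a, M i l a * xbar i a))) := by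
      have hpt : ∀ (a b : Fin nx),
          M i k a * M i l b * (p i j * (Sc i a b + ρ i * (xbar i a * xbar i b)))
            = p i j * (M i k a * Sc i a b * M i l b)
              + p i j * (ρ i * (M i k a * xbar i a * (M i l b * xbar i b))) :=
        fun a b => by ring
      simp_rw [hpt, Finset.sum_add_distrib]
      congr 1
      · rw [Finset.sum_comm, Finset.mul_sum]
        refine Finset.sum_congr rfl fun b _ => ?_
        rw [Finset.sum_mul, Finset.mul_sum]
        all_goals exact Finset.sum_congr rfl fun a _ => by ring
      · rw [Finset.sum_mul_sum]
        simp only [Finset.mul_sum]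
        all_goals exact Finset.sum_congr rfl fun a _ => Finset.sum_congr rfl fun b _ => by ring
    have hL2 : (∑ a : Fin nx, M i k a * bb i l * (p i j * (ρ i * xbar i a)))
        = p i j * (ρ i * (bb i l * ∑ a, M i k a * xbar i a)) := by
      simp only [Finset.mul_sum]
      exact Finset.sum_congr rfl fun a _ => by ring
    have hL3 : (∑ a : Fin nw, ∑ b : Fin nw,
          G i k a * G i l b * (p i j * (ρ i * (1 : Matrix (Fin nw) (Fin nw) ℝ) a b)))
        = p i j * (ρ i * ∑ a : Fin nw, G i k a * G i l a) := by
      simp only [Matrix.one_apply, mul_ite, ite_mul, mul_one, mul_zero, zero_mul,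
        Finset.sum_ite_eq, Finset.mem_univ, if_true]
      simp only [Finset.mul_sum]
      exact Finset.sum_congr rfl fun a _ => by ring
    have hL4 : (∑ a : Fin nx, bb i k * M i l a * (p i j * (ρ i * xbar i a)))
        = p i j * (ρ i * (bb i k * ∑ a, M i l a * xbar i a)) := by
      simp only [Finset.mul_sum]
      exact Finset.sum_congr rfl fun a _ => by ring
    rw [hL1, hL2, hL3, hL4]
    ring
  rw [hS' j k l,
    expand_integral P _ _ _ _ _ (hx'1 k) (hx'1 l) (hx'x' k l) (measure_ne_top P _),
    ← hq' j k, ← hq' j l, hPj, hq'x k, hq'x l, hsplit _ (hx'x' k l)]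
  simp only [hcore]
  simp only [Matrix.sub_apply, Matrix.sum_apply, Matrix.smul_apply, Matrix.vecMulVec_apply,
    smul_eq_mul]
  ring
end
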